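/- Every finite simple graph G with maximum degree at most 3 admits an edge labelling ℓ : E(G) → {1,2} such that for every integer x ≥ 1 the subgraph of G induced by the set S_x is a forest (contains no cycle). -/

import Mathlib

open Finset

set_option linter.unusedSectionVars false

namespace StmtAux

open SimpleGraph

variable {V : Type*} [Fintype V] [DecidableEq V] {G : SimpleGraph V} [DecidableRel G.Adj]

/-- number of neighbours of `v` having the same colour as `v` -/
def sameCnt (G : SimpleGraph V) [DecidableRel G.Adj] (c : V → Bool) (v : V) : ℕ :=
  ((G.neighborFinset v).filter (fun w => c w = c v)).card

lemma sameCnt_add (c : V → Bool) (v : V) :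
    sameCnt G c v + ((G.neighborFinset v).filter (fun w => ¬(c w = c v))).card = G.degree v := by
  rw [← SimpleGraph.card_neighborFinset_eq_degree]
  exact Finset.card_filter_add_card_filter_not _

lemma sameCnt_update_far {c : V → Bool} {v u : V} (huv : u ≠ v) (hadj : ¬ G.Adj v u) :
    sameCnt G (Function.update c v (!c v)) u = sameCnt G c u := by
  unfold sameCnt
  congr 1
  apply Finset.filter_congr
  intro w hw
  rw [SimpleGraph.mem_neighborFinset] at hw
  have hwv : w ≠ v := by rintro rfl; exact hadj hw.symm
  rw [Function.update_of_ne hwv, Function.update_of_ne huv]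

lemma sameCnt_update_self (c : V → Bool) (v : V) :
    (sameCnt G (Function.update c v (!c v)) v : ℤ) = G.degree v - sameCnt G c v := by
  have h1 : sameCnt G (Function.update c v (!c v)) v
      = ((G.neighborFinset v).filter (fun w => ¬(c w = c v))).card := by
    unfold sameCnt
    congr 1
    apply Finset.filter_congr
    intro w hw
    rw [SimpleGraph.mem_neighborFinset] at hw
    have hwv : w ≠ v := hw.ne'
    rw [Function.update_of_ne hwv, Function.update_self]
    exact Bool.eq_not_iff
  have h2 := sameCnt_add (G := G) c v
  omega

lemma sameCnt_update_near {c : V → Bool} {v u : V} (hadj : G.Adj v u) :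
    (sameCnt G (Function.update c v (!c v)) u : ℤ)
      = sameCnt G c u + (if c u = c v then -1 else 1) := by
  classical
  have huv : u ≠ v := hadj.ne'
  have hvin : v ∈ G.neighborFinset u := by rw [SimpleGraph.mem_neighborFinset]; exact hadj.symm
  set s := (G.neighborFinset u).erase v with hs
  have hins : insert v s = G.neighborFinset u := Finset.insert_erase hvin
  have hvns : v ∉ s := Finset.notMem_erase _ _
  set c' := Function.update c v (!c v) with hc'
  have hfe : s.filter (fun w => c' w = c' u) = s.filter (fun w => c w = c u) := by
    apply Finset.filter_congr
    intro w hw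
    have hwv : w ≠ v := Finset.ne_of_mem_erase hw
    rw [hc', Function.update_of_ne hwv, Function.update_of_ne huv]
  have hcu' : c' u = c u := Function.update_of_ne huv _ _
  have hcv' : c' v = !c v := Function.update_self _ _ _
  have e1 : sameCnt G c u = (s.filter (fun w => c w = c u)).card + (if c v = c u then 1 else 0) := by
    unfold sameCnt
    rw [← hins, Finset.filter_insert]
    by_cases h : c v = c u
    · rw [if_pos h, if_pos h,
        Finset.card_insert_of_notMem (fun hm => hvns (Finset.mem_of_mem_filter _ hm))]
    · rw [if_neg h, if_neg h, Nat.add_zero]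
  have e2 : sameCnt G c' u = (s.filter (fun w => c w = c u)).card + (if (!c v) = c u then 1 else 0) := by
    unfold sameCnt
    rw [← hins, Finset.filter_insert, hfe, hcv', hcu']
    by_cases h : (!c v) = c u
    · rw [if_pos h, if_pos h,
        Finset.card_insert_of_notMem (fun hm => hvns (Finset.mem_of_mem_filter _ hm))]
    · rw [if_neg h, if_neg h, Nat.add_zero]
  rw [e1, e2]
  cases hcv : c v <;> cases hcu : c u <;> simp <;> ring


lemma exists_balanced (G : SimpleGraph V) [DecidableRel G.Adj] :
    ∃ c : V → Bool, ∀ v, 2 * sameCnt G c v ≤ G.degree v := by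
  obtain ⟨c, -, hc⟩ := Finset.exists_min_image (univ : Finset (V → Bool))
    (fun c => ∑ u, sameCnt G c u) ⟨fun _ => false, Finset.mem_univ _⟩
  refine ⟨c, fun v => ?_⟩
  set c' := Function.update c v (!c v) with hc'
  have hle : (∑ u, (sameCnt G c u : ℤ)) ≤ ∑ u, (sameCnt G c' u : ℤ) := by
    have := hc c' (Finset.mem_univ _)
    exact_mod_cast this
  have hnm : v ∉ G.neighborFinset v := by
    rw [SimpleGraph.mem_neighborFinset]; exact G.irrefl
  have key : (∑ u, ((sameCnt G c' u : ℤ) - sameCnt G c u))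
      = 2 * G.degree v - 4 * sameCnt G c v := by
    have hzero : ∀ u ∈ (univ : Finset V), u ∉ insert v (G.neighborFinset v) →
        ((sameCnt G c' u : ℤ) - sameCnt G c u) = 0 := by
      intro u _ hu
      rw [Finset.mem_insert, SimpleGraph.mem_neighborFinset] at hu
      push_neg at hu
      rw [sameCnt_update_far hu.1 hu.2, sub_self]
    rw [← Finset.sum_subset (Finset.subset_univ (insert v (G.neighborFinset v))) hzero,
      Finset.sum_insert hnm]
    have h1 : (sameCnt G c' v : ℤ) - sameCnt G c v
        = (G.degree v : ℤ) - 2 * sameCnt G c v := by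
      rw [sameCnt_update_self]; ring
    have h2 : ∑ u ∈ G.neighborFinset v, ((sameCnt G c' u : ℤ) - sameCnt G c u)
        = (G.degree v : ℤ) - 2 * sameCnt G c v := by
      have hcg : ∀ u ∈ G.neighborFinset v, ((sameCnt G c' u : ℤ) - sameCnt G c u)
          = (if c u = c v then (-1 : ℤ) else 1) := by
        intro u hu
        rw [SimpleGraph.mem_neighborFinset] at hu
        rw [sameCnt_update_near hu]; ring
      rw [Finset.sum_congr rfl hcg, Finset.sum_ite, Finset.sum_const, Finset.sum_const]
      have := sameCnt_add (G := G) c v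
      have hsame : ((G.neighborFinset v).filter (fun w => c w = c v)).card = sameCnt G c v := rfl
      have hdiff : ((G.neighborFinset v).filter (fun w => ¬(c w = c v))).card
          = G.degree v - sameCnt G c v := by omega
      rw [hsame, hdiff]
      have hle2 : sameCnt G c v ≤ G.degree v := by omega
      simp only [nsmul_eq_mul, mul_one, mul_neg_one]
      rw [Nat.cast_sub hle2]
      ring
    rw [h1, h2]; ring
  rw [Finset.sum_sub_distrib] at key
  have : (2 * (sameCnt G c v) : ℤ) ≤ G.degree v := by omega
  exact_mod_cast this


lemma two_same {c : V → Bool} (hs1 : ∀ w, sameCnt G c w ≤ 1) {u a b : V}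
    (hua : G.Adj u a) (hub : G.Adj u b) (hab : a ≠ b)
    (hca : c a = c u) (hcb : c b = c u) : False := by
  have hsub : ({a, b} : Finset V) ⊆ (G.neighborFinset u).filter (fun w => c w = c u) := by
    intro x hx
    rw [Finset.mem_insert, Finset.mem_singleton] at hx
    rcases hx with rfl | rfl <;>
      · rw [Finset.mem_filter, SimpleGraph.mem_neighborFinset]
        exact ⟨by assumption, by assumption⟩
  have h2 : 2 ≤ sameCnt G c u := by
    calc 2 = ({a, b} : Finset V).card := (Finset.card_pair hab).symm
    _ ≤ _ := Finset.card_le_card hsub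
  have := hs1 u
  omega

lemma cyc_struct {v : V} (p : G.Walk v v) (hp : p.IsCycle) :
    (∃ a b, G.Adj v a ∧ G.Adj a b ∧ G.Adj b v ∧ a ≠ b ∧ a ≠ v ∧ b ≠ v ∧
      a ∈ p.support ∧ b ∈ p.support) ∨
    (∃ u a b, G.Adj u a ∧ G.Adj u b ∧ a ≠ b ∧ u ≠ v ∧ a ≠ v ∧ b ≠ v ∧
      u ∈ p.support ∧ a ∈ p.support ∧ b ∈ p.support) := by
  have hlen := hp.three_le_length
  have hnd := hp.support_nodup
  cases p with
  | nil => simp at hlen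
  | cons h1 p1 =>
    cases p1 with
    | nil => simp at hlen
    | cons h2 p2 =>
      cases p2 with
      | nil => simp at hlen
      | cons h3 p3 =>
        cases p3 with
        | nil =>
          left
          exact ⟨_, _, h1, h2, h3, h2.ne, h1.ne', h3.ne, by simp, by simp⟩
        | cons h4 p4 =>
          right
          simp only [SimpleGraph.Walk.support_cons, List.tail_cons, List.nodup_cons] at hnd
          obtain ⟨ha, hb, hd, -⟩ := hnd
          have hvp4 : v ∈ p4.support := p4.end_mem_support
          refine ⟨_, _, _, h2.symm, h3, ?_, ?_, ?_, ?_, by simp, by simp, ?_⟩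
          · -- a ≠ d
            intro h
            exact ha (by rw [h]; simp)
          · -- b ≠ v
            intro h
            exact hb (by rw [h]; exact List.mem_cons_of_mem _ hvp4)
          · -- a ≠ v
            intro h
            exact ha (by rw [h]; exact List.mem_cons_of_mem _ (List.mem_cons_of_mem _ hvp4))
          · -- d ≠ v
            intro h
            exact hd (by rw [h]; exact hvp4)
          · -- d ∈ support
            simp [SimpleGraph.Walk.support_cons]

lemma no_mono_cycle {c : V → Bool} (hs1 : ∀ w, sameCnt G c w ≤ 1) {v : V}
    (p : G.Walk v v) (hp : p.IsCycle) (hmono : ∀ u ∈ p.support, c u = c v) : False := by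
  rcases cyc_struct p hp with
    ⟨a, b, hva, hab, hbv, hne, hav, hbv', ha, hb⟩ |
    ⟨u, a, b, hua, hub, hab, huv, hav, hbv, hu, ha, hb⟩
  · refine two_same hs1 hva.symm hab (fun h => hbv' h.symm) ?_ ?_
    · exact (hmono v p.start_mem_support).trans (hmono a ha).symm
    · exact (hmono b hb).trans (hmono a ha).symm
  · refine two_same hs1 hua hub hab ?_ ?_
    · exact (hmono a ha).trans (hmono u hu).symm
    · exact (hmono b hb).trans (hmono u hu).symm

lemma no_cycle_with_root {c : V → Bool} (hs1 : ∀ w, sameCnt G c w ≤ 1) {r : V}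
    (hnf : ¬ ∃ a b, G.Adj r a ∧ G.Adj r b ∧ G.Adj a b ∧ a ≠ b ∧
      c a = !(c r) ∧ c b = !(c r))
    (p : G.Walk r r) (hp : p.IsCycle)
    (hsup : ∀ u ∈ p.support, u = r ∨ c u = !(c r)) : False := by
  rcases cyc_struct p hp with
    ⟨a, b, hva, hab, hbv, hne, hav, hbv', ha, hb⟩ |
    ⟨u, a, b, hua, hub, hab, huv, hav, hbv, hu, ha, hb⟩
  · have hca := (hsup a ha).resolve_left hav
    have hcb := (hsup b hb).resolve_left hbv'
    exact hnf ⟨a, b, hva, hbv.symm, hab, hne, hca, hcb⟩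
  · have hcu := (hsup u hu).resolve_left huv
    have hca := (hsup a ha).resolve_left hav
    have hcb := (hsup b hb).resolve_left hbv
    exact two_same hs1 hua hub hab (hca.trans hcu.symm) (hcb.trans hcu.symm)


lemma walk_closure {S : Finset V} (hS : ∀ a ∈ S, ∀ b, G.Adj a b → b ∈ S)
    {u w : V} (p : G.Walk u w) (hu : u ∈ S) : w ∈ S := by
  induction p with
  | nil => exact hu
  | cons h q ih => exact ih (hS _ hu _ h)

lemma four_nbrs (hdeg : ∀ v, G.degree v ≤ 3) {z p q r s : V}
    (h1 : G.Adj z p) (h2 : G.Adj z q) (h3 : G.Adj z r) (h4 : G.Adj z s)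
    (hpq : p ≠ q) (hpr : p ≠ r) (hps : p ≠ s) (hqr : q ≠ r) (hqs : q ≠ s)
    (hrs : r ≠ s) : False := by
  have hsub : ({p, q, r, s} : Finset V) ⊆ G.neighborFinset z := by
    intro x hx
    simp only [Finset.mem_insert, Finset.mem_singleton] at hx
    rw [SimpleGraph.mem_neighborFinset]
    rcases hx with rfl | rfl | rfl | rfl <;> assumption
  have hc : ({p, q, r, s} : Finset V).card = 4 := by
    rw [Finset.card_insert_of_notMem (by simp [hpq, hpr, hps]),
      Finset.card_insert_of_notMem (by simp [hqr, hqs]), Finset.card_pair hrs]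
  have hle := Finset.card_le_card hsub
  rw [hc, SimpleGraph.card_neighborFinset_eq_degree] at hle
  have := hdeg z
  omega

lemma exists_good_root [DecidableEq G.ConnectedComponent]
    (hdeg : ∀ v, G.degree v ≤ 3) (c : V → Bool)
    (K : G.ConnectedComponent)
    (hbad : Odd (univ.filter
      (fun w => G.connectedComponentMk w = K ∧ c w = true)).card) :
    ∃ r, G.connectedComponentMk r = K ∧
      ¬ ∃ a b, G.Adj r a ∧ G.Adj r b ∧ G.Adj a b ∧ a ≠ b ∧
        c a = !(c r) ∧ c b = !(c r) := by
  classical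
  by_contra hno
  push_neg at hno
  obtain ⟨v, hv⟩ := Finset.card_pos.mp hbad.pos
  rw [Finset.mem_filter] at hv
  obtain ⟨-, hvK, hvc⟩ := hv
  obtain ⟨a1, a2, hva1, hva2, ha12, hane, hca1, hca2⟩ := hno v hvK
  rw [hvc] at hca1 hca2
  simp only [Bool.not_true] at hca1 hca2
  have ha1K : G.connectedComponentMk a1 = K :=
    (SimpleGraph.ConnectedComponent.connectedComponentMk_eq_of_adj hva1).symm.trans hvK
  have ha2K : G.connectedComponentMk a2 = K :=
    (SimpleGraph.ConnectedComponent.connectedComponentMk_eq_of_adj hva2).symm.trans hvK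
  -- a helper to get the common neighbour from a failing vertex of the opposite colour
  have getx : ∀ a a' : V, G.Adj v a → G.Adj v a' → G.Adj a a' → c a = false →
      c a' = false → G.connectedComponentMk a = K →
      ∃ x, G.Adj a x ∧ G.Adj v x ∧ c x = true ∧ x ≠ v := by
    intro a a' hva hva' haa' hca hca' haK
    obtain ⟨w1, w2, haw1, haw2, hw12, hwne, hcw1, hcw2⟩ := hno a haK
    rw [hca] at hcw1 hcw2
    simp only [Bool.not_false] at hcw1 hcw2
    have hvw : v = w1 ∨ v = w2 := by
      by_contra hcon
      push_neg at hcon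
      refine four_nbrs hdeg hva.symm haa' haw1 haw2 ?_ ?_ ?_ ?_ ?_ hwne
      · exact fun h => by rw [h, hca'] at hvc; simp at hvc
      · exact hcon.1
      · exact hcon.2
      · exact fun h => by rw [h, hcw1] at hca'; simp at hca'
      · exact fun h => by rw [h, hcw2] at hca'; simp at hca'
    rcases hvw with rfl | rfl
    · exact ⟨w2, haw2, hw12, hcw2, fun h => hwne h.symm⟩
    · exact ⟨w1, haw1, hw12.symm, hcw1, hwne⟩
  obtain ⟨x, ha1x, hvx, hcx, hxv⟩ := getx a1 a2 hva1 hva2 ha12 hca1 hca2 ha1K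
  obtain ⟨y, ha2y, hvy, hcy, hyv⟩ := getx a2 a1 hva2 hva1 ha12.symm hca2 hca1 ha2K
  have hxy : x = y := by
    by_contra hcon
    refine four_nbrs hdeg hva1 hva2 hvx hvy hane ?_ ?_ ?_ ?_ hcon
    · exact fun h => by rw [h, hcx] at hca1; simp at hca1
    · exact fun h => by rw [h, hcy] at hca1; simp at hca1
    · exact fun h => by rw [h, hcx] at hca2; simp at hca2
    · exact fun h => by rw [h, hcy] at hca2; simp at hca2
  subst hxy
  have ha2x : G.Adj a2 x := ha2y
  -- the four vertices
  have hvna1 : v ≠ a1 := hva1.ne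
  have hvna2 : v ≠ a2 := hva2.ne
  have ha1nx : a1 ≠ x := ha1x.ne
  have ha2nx : a2 ≠ x := ha2x.ne
  set S : Finset V := {v, a1, a2, x} with hS
  have hcard3 : ∀ b1 b2 b3 : V, b1 ≠ b2 → b1 ≠ b3 → b2 ≠ b3 →
      ({b1, b2, b3} : Finset V).card = 3 := by
    intro b1 b2 b3 h12 h13 h23
    rw [Finset.card_insert_of_notMem (by simp [h12, h13]), Finset.card_pair h23]
  have hNeq : ∀ z b1 b2 b3 : V, G.Adj z b1 → G.Adj z b2 → G.Adj z b3 →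
      b1 ≠ b2 → b1 ≠ b3 → b2 ≠ b3 → G.neighborFinset z = {b1, b2, b3} := by
    intro z b1 b2 b3 hb1 hb2 hb3 h12 h13 h23
    refine (Finset.eq_of_subset_of_card_le ?_ ?_).symm
    · intro t ht
      simp only [Finset.mem_insert, Finset.mem_singleton] at ht
      rw [SimpleGraph.mem_neighborFinset]
      rcases ht with rfl | rfl | rfl <;> assumption
    · rw [hcard3 _ _ _ h12 h13 h23, SimpleGraph.card_neighborFinset_eq_degree]
      exact hdeg z
  have hNv : G.neighborFinset v = {a1, a2, x} :=
    hNeq v a1 a2 x hva1 hva2 hvx hane ha1nx ha2nx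
  have hNa1 : G.neighborFinset a1 = {v, a2, x} :=
    hNeq a1 v a2 x hva1.symm ha12 ha1x hvna2 (fun h => hxv h.symm) ha2nx
  have hNa2 : G.neighborFinset a2 = {v, a1, x} :=
    hNeq a2 v a1 x hva2.symm ha12.symm ha2x hvna1 (fun h => hxv h.symm) ha1nx
  have hNx : G.neighborFinset x = {v, a1, a2} :=
    hNeq x v a1 a2 hvx.symm ha1x.symm ha2x.symm hvna1 hvna2 hane
  have hclosed : ∀ a ∈ S, ∀ b, G.Adj a b → b ∈ S := by
    intro a haS b hab
    have hbN : b ∈ G.neighborFinset a := by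
      rw [SimpleGraph.mem_neighborFinset]; exact hab
    simp only [hS, Finset.mem_insert, Finset.mem_singleton] at haS ⊢
    rcases haS with rfl | rfl | rfl | rfl
    · rw [hNv] at hbN
      simp only [Finset.mem_insert, Finset.mem_singleton] at hbN
      tauto
    · rw [hNa1] at hbN
      simp only [Finset.mem_insert, Finset.mem_singleton] at hbN
      tauto
    · rw [hNa2] at hbN
      simp only [Finset.mem_insert, Finset.mem_singleton] at hbN
      tauto
    · rw [hNx] at hbN
      simp only [Finset.mem_insert, Finset.mem_singleton] at hbN
      tauto
  have hcl : ∀ w, G.connectedComponentMk w = K → w ∈ S := by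
    intro w hw
    obtain ⟨p⟩ := SimpleGraph.ConnectedComponent.exact (hvK.trans hw.symm)
    refine walk_closure hclosed p ?_
    simp [hS]
  have hfil : (univ.filter (fun w => G.connectedComponentMk w = K ∧ c w = true))
      = {v, x} := by
    ext w
    simp only [Finset.mem_filter, Finset.mem_univ, true_and, Finset.mem_insert,
      Finset.mem_singleton]
    constructor
    · rintro ⟨hwK, hwc⟩
      have hwS := hcl w hwK
      simp only [hS, Finset.mem_insert, Finset.mem_singleton] at hwS
      rcases hwS with rfl | rfl | rfl | rfl
      · exact Or.inl rfl
      · rw [hwc] at hca1; simp at hca1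
      · rw [hwc] at hca2; simp at hca2
      · exact Or.inr rfl
    · rintro (rfl | rfl)
      · exact ⟨hvK, hvc⟩
      · exact ⟨(SimpleGraph.ConnectedComponent.connectedComponentMk_eq_of_adj hvx).symm.trans hvK, hcx⟩
  rw [hfil, Finset.card_pair (fun h => hxv h.symm)] at hbad
  exact absurd hbad (by decide)


lemma zmod2_even {n : ℕ} (h : Even n) : (n : ZMod 2) = 0 := by
  obtain ⟨m, rfl⟩ := h
  push_cast
  rw [← two_mul, (by decide : (2 : ZMod 2) = 0), zero_mul]

lemma zmod2_ite_odd (n : ℕ) :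
    (((if Odd n then 1 else 0 : ℕ)) : ZMod 2) = (n : ZMod 2) := by
  rcases Nat.even_or_odd n with he | ho
  · rw [if_neg (Nat.not_odd_iff_even.mpr he), zmod2_even he, Nat.cast_zero]
  · obtain ⟨m, rfl⟩ := ho
    rw [if_pos ⟨m, rfl⟩]
    push_cast
    try rw [(by decide : (2 : ZMod 2) = 0)]
    try ring
    try rfl

lemma zmod2_ite_odd' (n : ℕ) :
    (if Odd n then (1 : ZMod 2) else 0) = (n : ZMod 2) := by
  rcases Nat.even_or_odd n with he | ho
  · rw [if_neg (Nat.not_odd_iff_even.mpr he), zmod2_even he]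
  · obtain ⟨m, rfl⟩ := ho
    rw [if_pos ⟨m, rfl⟩]
    push_cast
    try rw [(by decide : (2 : ZMod 2) = 0)]
    try ring
    try rfl

lemma walk_countP_parity (v : V) {a b : V} (w : G.Walk a b) :
    ((w.edges.countP (fun e => decide (v ∈ e))) : ZMod 2)
      = (if v = a then 1 else 0) + (if v = b then 1 else 0) := by
  induction w with
  | nil =>
    rename_i u
    simp only [SimpleGraph.Walk.edges_nil, List.countP_nil, Nat.cast_zero]
    by_cases h : v = u
    · rw [if_pos h]; decide
    · rw [if_neg h]; decide
  | @cons a c b h p ih =>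
    rw [SimpleGraph.Walk.edges_cons, List.countP_cons, Nat.cast_add, ih]
    have hac : a ≠ c := h.ne
    by_cases hva : v = a
    · have hvc : ¬ v = c := fun hh => hac (hva.symm.trans hh)
      rw [if_neg hvc, if_pos hva,
        if_pos (by simp [Sym2.mem_iff, hva] : decide (v ∈ s(a, c)) = true)]
      push_cast
      ring
    · by_cases hvc : v = c
      · rw [if_pos hvc, if_neg hva,
          if_pos (by simp [Sym2.mem_iff, hvc] : decide (v ∈ s(a, c)) = true)]
        push_cast
        have h2 : (1 : ZMod 2) + 1 = 0 := by decide
        linear_combination h2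
      · rw [if_neg hvc, if_neg hva,
          if_neg (by simp [Sym2.mem_iff, hva, hvc] : ¬ decide (v ∈ s(a, c)) = true)]
        push_cast
        ring

lemma sum_count_eq_countP (s : Finset (Sym2 V)) (l : List (Sym2 V)) :
    ∑ e ∈ s, l.count e = l.countP (fun e => decide (e ∈ s)) := by
  induction l with
  | nil => simp
  | cons a l ih =>
    rw [List.countP_cons]
    simp only [List.count_cons]
    rw [Finset.sum_add_distrib, ih]
    congr 1
    simp [Finset.sum_ite_eq]

end StmtAux


/-- The product of the labels assigned by `ℓ` to the edges incident to `v`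
(an empty product equals `1`). -/
def vertexProd {V : Type*} [Fintype V] [DecidableEq V] (G : SimpleGraph V)
    [DecidableRel G.Adj] (ℓ : Sym2 V → ℕ) (v : V) : ℕ :=
  ∏ e ∈ G.incidenceFinset v, ℓ e

/-- Every finite simple graph `G` with maximum degree at most `3` admits a
`2`-labelling of its edges such that for every `x ≥ 1` the subgraph of `G` induced
by `S_x = {v | ρ(v) = x}` is a forest. -/
theorem stmt_8 {V : Type*} [Fintype V] [DecidableEq V] (G : SimpleGraph V)
    [DecidableRel G.Adj] (hdeg : ∀ v : V, G.degree v ≤ 3) :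
    ∃ ℓ : Sym2 V → ℕ,
      (∀ e ∈ G.edgeSet, ℓ e ∈ ({1, 2} : Set ℕ)) ∧
      ∀ x : ℕ, 1 ≤ x →
        (G.induce {v : V | vertexProd G ℓ v = x}).IsAcyclic := by
  classical
  obtain ⟨c, hbal⟩ := StmtAux.exists_balanced G
  have hs1 : ∀ v, StmtAux.sameCnt G c v ≤ 1 := by
    intro v
    have h1 := hbal v
    have h2 := hdeg v
    have h3 := StmtAux.sameCnt_add (G := G) c v
    omega
  letI : DecidableEq G.ConnectedComponent := Classical.decEq _
  set tc : G.ConnectedComponent → ℕ := fun K =>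
    (univ.filter (fun w => G.connectedComponentMk w = K ∧ c w = true)).card with htc
  have hroot : ∀ K : G.ConnectedComponent, ∃ r, G.connectedComponentMk r = K ∧
      (Odd (tc K) → ¬ ∃ a b, G.Adj r a ∧ G.Adj r b ∧ G.Adj a b ∧ a ≠ b ∧
        c a = !(c r) ∧ c b = !(c r)) := by
    intro K
    by_cases h : Odd (tc K)
    · obtain ⟨r, hr1, hr2⟩ := StmtAux.exists_good_root hdeg c K h
      exact ⟨r, hr1, fun _ => hr2⟩
    · obtain ⟨r, hr⟩ := K.exists_rep
      exact ⟨r, hr, fun hodd => absurd hodd h⟩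
  choose root hrootK hrootgood using hroot
  set c' : V → Bool := fun v =>
    if Odd (tc (G.connectedComponentMk v)) ∧ v = root (G.connectedComponentMk v)
    then !(c v) else c v with hc'
  have hc'flip : ∀ K, Odd (tc K) → c' (root K) = !(c (root K)) := by
    intro K hodd
    rw [hc']
    refine if_pos ⟨?_, ?_⟩ <;> rw [hrootK K]
    exact hodd
  have hc'rest : ∀ K, ∀ w, G.connectedComponentMk w = K → w ≠ root K → c' w = c w := by
    intro K w hwK hw
    rw [hc']
    refine if_neg ?_
    rintro ⟨-, h2⟩
    rw [hwK] at h2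
    exact hw h2
  have heven : ∀ K, Even ((univ.filter
      (fun w => G.connectedComponentMk w = K ∧ c' w = true)).card) := by
    intro K
    by_cases hodd : Odd (tc K)
    · have hrK : G.connectedComponentMk (root K) = K := hrootK K
      have hflip := hc'flip K hodd
      cases hcr : c (root K) with
      | false =>
        have hset : (univ.filter (fun w => G.connectedComponentMk w = K ∧ c' w = true))
            = insert (root K)
              (univ.filter (fun w => G.connectedComponentMk w = K ∧ c w = true)) := by
          ext w
          simp only [Finset.mem_filter, Finset.mem_univ, true_and, Finset.mem_insert]
          constructor
          · rintro ⟨hwK, hwc⟩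
            by_cases hw : w = root K
            · exact Or.inl hw
            · exact Or.inr ⟨hwK, by rwa [hc'rest K w hwK hw] at hwc⟩
          · rintro (rfl | ⟨hwK, hwc⟩)
            · exact ⟨hrK, by rw [hflip, hcr]; rfl⟩
            · refine ⟨hwK, ?_⟩
              have hw : w ≠ root K := by
                rintro rfl
                rw [hcr] at hwc
                exact Bool.false_ne_true hwc
              rwa [hc'rest K w hwK hw]
        rw [hset, Finset.card_insert_of_notMem (by
          simp only [Finset.mem_filter, Finset.mem_univ, true_and, hcr]
          rintro ⟨-, h⟩
          exact Bool.false_ne_true h)]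
        exact hodd.add_one
      | true =>
        have hset : (univ.filter (fun w => G.connectedComponentMk w = K ∧ c' w = true))
            = (univ.filter (fun w => G.connectedComponentMk w = K ∧ c w = true)).erase
                (root K) := by
          ext w
          simp only [Finset.mem_filter, Finset.mem_univ, true_and, Finset.mem_erase]
          constructor
          · rintro ⟨hwK, hwc⟩
            have hw : w ≠ root K := by
              rintro rfl
              rw [hflip, hcr] at hwc
              exact Bool.false_ne_true hwc
            exact ⟨hw, hwK, by rwa [hc'rest K w hwK hw] at hwc⟩
          · rintro ⟨hw, hwK, hwc⟩
            exact ⟨hwK, by rwa [hc'rest K w hwK hw]⟩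
        rw [hset, Finset.card_erase_of_mem (by
          simp only [Finset.mem_filter, Finset.mem_univ, true_and]
          exact ⟨hrK, hcr⟩)]
        obtain ⟨j, hj⟩ := hodd
        have hj2 : (univ.filter
            (fun w => G.connectedComponentMk w = K ∧ c w = true)).card = 2 * j + 1 := hj
        exact ⟨j, by omega⟩
    · have h1 : ∀ w, G.connectedComponentMk w = K → c' w = c w := by
        intro w hwK
        rw [hc']
        refine if_neg ?_
        rintro ⟨h, -⟩
        rw [hwK] at h
        exact hodd h
      have hset : (univ.filter (fun w => G.connectedComponentMk w = K ∧ c' w = true))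
          = (univ.filter (fun w => G.connectedComponentMk w = K ∧ c w = true)) := by
        ext w
        simp only [Finset.mem_filter, Finset.mem_univ, true_and]
        constructor
        · rintro ⟨hwK, hwc⟩
          exact ⟨hwK, by rwa [h1 w hwK] at hwc⟩
        · rintro ⟨hwK, hwc⟩
          exact ⟨hwK, by rwa [h1 w hwK]⟩
      rw [hset]
      rwa [Nat.not_odd_iff_even] at hodd
  -- walks to roots
  have hreach : ∀ t : V, G.Reachable t (root (G.connectedComponentMk t)) := by
    intro t
    apply SimpleGraph.ConnectedComponent.exact
    rw [hrootK (G.connectedComponentMk t)]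
  set wk : (t : V) → G.Walk t (root (G.connectedComponentMk t)) :=
    fun t => (hreach t).some with hwk
  set m : Sym2 V → ℕ := fun e =>
    ∑ t ∈ univ.filter (fun t => c' t = true), (wk t).edges.count e with hm
  set L : Sym2 V → ℕ := fun e => if Odd (m e) then 2 else 1 with hL
  set k : V → ℕ := fun v =>
    ((G.incidenceFinset v).filter (fun e => Odd (m e))).card with hk0
  have hprod : ∀ v, vertexProd G L v = 2 ^ k v := by
    intro v
    unfold vertexProd
    rw [hL, hk0]
    dsimp only
    rw [Finset.prod_ite, Finset.prod_const, Finset.prod_const, one_pow, mul_one]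
  have hkpar : ∀ v, ((k v : ZMod 2)) = (if c' v = true then 1 else 0) := by
    intro v
    rw [hk0]
    dsimp only
    rw [Finset.natCast_card_filter]
    rw [Finset.sum_congr rfl (fun e _ => StmtAux.zmod2_ite_odd' (m e)), ← Nat.cast_sum]
    have e3 : ∑ e ∈ G.incidenceFinset v, m e
        = ∑ t ∈ univ.filter (fun t => c' t = true),
            ((wk t).edges.countP (fun e => decide (v ∈ e))) := by
      rw [hm]
      dsimp only
      rw [Finset.sum_comm]
      refine Finset.sum_congr rfl (fun t _ => ?_)
      rw [StmtAux.sum_count_eq_countP]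
      refine List.countP_congr (fun e he => ?_)
      have hedge : e ∈ G.edgeSet := (wk t).edges_subset_edgeSet he
      simp only [decide_eq_true_eq, SimpleGraph.mem_incidenceFinset]
      constructor
      · intro hmem
        exact hmem.2
      · intro hmem
        exact ⟨hedge, hmem⟩
    rw [e3, Nat.cast_sum]
    rw [Finset.sum_congr rfl (fun t _ => StmtAux.walk_countP_parity v (wk t)),
      Finset.sum_add_distrib]
    have e6 : ∑ t ∈ univ.filter (fun t => c' t = true), (if v = t then (1 : ZMod 2) else 0)
        = (if c' v = true then 1 else 0) := by
      rw [Finset.sum_ite_eq]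
      simp
    have e7 : ∑ t ∈ univ.filter (fun t => c' t = true),
        (if v = root (G.connectedComponentMk t) then (1 : ZMod 2) else 0) = 0 := by
      rw [Finset.sum_ite, Finset.sum_const, Finset.sum_const, smul_zero, add_zero,
        Finset.filter_filter]
      by_cases hvr : v = root (G.connectedComponentMk v)
      · have hsame : (univ.filter (fun t => c' t = true ∧
            v = root (G.connectedComponentMk t)))
            = (univ.filter (fun w => G.connectedComponentMk w
                = G.connectedComponentMk v ∧ c' w = true)) := by
          ext t
          simp only [Finset.mem_filter, Finset.mem_univ, true_and]
          constructor
          · rintro ⟨htc, hvt⟩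
            have h1 : G.connectedComponentMk v = G.connectedComponentMk t := by
              rw [hvt]
              exact hrootK (G.connectedComponentMk t)
            exact ⟨h1.symm, htc⟩
          · rintro ⟨htK, htc⟩
            refine ⟨htc, ?_⟩
            rw [htK]
            exact hvr
        rw [hsame]
        have := heven (G.connectedComponentMk v)
        rw [nsmul_eq_mul, mul_one]
        exact StmtAux.zmod2_even this
      · have hempty : (univ.filter (fun t => c' t = true ∧
            v = root (G.connectedComponentMk t))) = ∅ := by
          ext t
          simp only [Finset.mem_filter, Finset.mem_univ, true_and,
            Finset.notMem_empty, iff_false]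
          rintro ⟨-, hvt⟩
          have h1 : G.connectedComponentMk v = G.connectedComponentMk t := by
            rw [hvt]
            exact hrootK (G.connectedComponentMk t)
          apply hvr
          rw [h1]
          exact hvt
        rw [hempty]
        simp
    rw [e6, e7, add_zero]
  refine ⟨L, ?_, ?_⟩
  · intro e _
    by_cases h : Odd (m e)
    · have hv : L e = 2 := if_pos h
      rw [hv]
      right
      rfl
    · have hv : L e = 1 := if_neg h
      rw [hv]
      left
      rfl
  · intro x hx
    intro w p hp
    set f := SimpleGraph.Embedding.induce {v : V | vertexProd G L v = x} with hf
    set v0 : V := f.toHom w with hv0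
    set p' := p.map f.toHom with hp'def
    have hp' : p'.IsCycle :=
      (SimpleGraph.Walk.map_isCycle_iff_of_injective f.injective).mpr hp
    have hv0sup : v0 ∈ p'.support := p'.start_mem_support
    have htail : ∀ (y : V) (q : G.Walk y y), q.IsCycle →
        ∀ u, u ∈ q.support ↔ u ∈ q.support.tail := by
      intro y q hq u
      cases q with
      | nil => exact absurd hq.three_le_length (by simp)
      | cons h qq =>
        rw [SimpleGraph.Walk.support_cons]
        simp only [List.tail_cons, List.mem_cons]
        constructor
        · rintro (rfl | hm)
          · exact qq.end_mem_support
          · exact hm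
        · exact fun hm => Or.inr hm
    have hsupx : ∀ u ∈ p'.support, vertexProd G L u = x := by
      intro u hu
      rw [hp'def, SimpleGraph.Walk.support_map] at hu
      obtain ⟨u', _, rfl⟩ := List.mem_map.mp hu
      exact u'.2
    have hkconst : ∀ u ∈ p'.support, k u = k v0 := by
      intro u hu
      have h1 : (2 : ℕ) ^ k u = 2 ^ k v0 := by
        rw [← hprod, ← hprod, hsupx u hu, hsupx v0 hv0sup]
      exact Nat.pow_right_injective (le_refl 2) h1
    have hcconst : ∀ u ∈ p'.support, c' u = c' v0 := by
      intro u hu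
      have h1 := hkpar u
      have h2 := hkpar v0
      rw [hkconst u hu, h2] at h1
      by_cases b1 : c' u = true <;> by_cases b2 : c' v0 = true
      · rw [b1, b2]
      · rw [if_pos b1, if_neg b2] at h1
        exact absurd h1.symm (by decide)
      · rw [if_neg b1, if_pos b2] at h1
        exact absurd h1 (by decide)
      · rw [Bool.not_eq_true] at b1 b2
        rw [b1, b2]
    have hcomp : ∀ u ∈ p'.support, G.connectedComponentMk u = G.connectedComponentMk v0 := by
      intro u hu
      exact (SimpleGraph.ConnectedComponent.sound ⟨p'.takeUntil u hu⟩).symm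
    by_cases hodd : Odd (tc (G.connectedComponentMk v0))
    · set K := G.connectedComponentMk v0 with hK
      set r := root K with hr
      have hrK : G.connectedComponentMk r = K := hrootK K
      have hnf := hrootgood K hodd
      have hflip : c' r = !(c r) := hc'flip K hodd
      have hrest : ∀ u, G.connectedComponentMk u = K → u ≠ r → c' u = c u :=
        fun u h1 h2 => hc'rest K u h1 h2
      by_cases hbc : c' v0 = c r
      · -- r is not on the cycle, and the cycle is c-monochromatic
        have hrns : ∀ u ∈ p'.support, u ≠ r := by
          intro u hu h
          have h1 := hcconst u hu
          rw [h, hflip, hbc] at h1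
          exact Bool.not_ne_self (c r) h1
        refine StmtAux.no_mono_cycle hs1 p' hp' (fun u hu => ?_)
        have h1 : c' u = c u := hrest u (hcomp u hu) (hrns u hu)
        have h2 : c' v0 = c v0 := hrest v0 rfl (hrns v0 hv0sup)
        exact (h1.symm.trans (hcconst u hu)).trans h2
      · have hbc2 : c' v0 = !(c r) := by
          cases h1 : c' v0 <;> cases h2 : c r
          · rw [h1, h2] at hbc; exact absurd rfl hbc
          · rfl
          · rfl
          · rw [h1, h2] at hbc; exact absurd rfl hbc
        by_cases hrs : r ∈ p'.support
        · set q := p'.rotate r hrs with hq0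
          have hq : q.IsCycle := hp'.rotate hrs
          have hqsup : ∀ u, u ∈ q.support ↔ u ∈ p'.support := by
            intro u
            rw [htail r q hq u, htail _ p' hp' u]
            rw [hq0]
            exact (SimpleGraph.Walk.support_rotate p' r hrs).mem_iff
          refine StmtAux.no_cycle_with_root hs1 hnf q hq (fun u hu => ?_)
          rw [hqsup] at hu
          by_cases hur : u = r
          · exact Or.inl hur
          · right
            rw [← hrest u (hcomp u hu) hur, hcconst u hu]
            exact hbc2
        · refine StmtAux.no_mono_cycle hs1 p' hp' (fun u hu => ?_)
          have h1 : c' u = c u :=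
            hrest u (hcomp u hu) (fun h => hrs (h ▸ hu))
          have h2 : c' v0 = c v0 :=
            hrest v0 rfl (fun h => hrs (h ▸ hv0sup))
          exact (h1.symm.trans (hcconst u hu)).trans h2
    · refine StmtAux.no_mono_cycle hs1 p' hp' (fun u hu => ?_)
      have h1 : c' u = c u := by
        rw [hc']
        refine if_neg ?_
        rintro ⟨h, -⟩
        rw [hcomp u hu] at h
        exact hodd h
      have h2 : c' v0 = c v0 := by
        rw [hc']
        refine if_neg ?_
        rintro ⟨h, -⟩
        exact hodd h
      exact (h1.symm.trans (hcconst u hu)).trans h2
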